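/- arXiv:1503.00271 — 3 statements merged into one kernel-verified Lean document; each statement's English description precedes it below -/
import Mathlib

section
/- Let n ≥ 1 and σ ∈ (0,1). The function w(x,y) = y^{2σ} (|x|² + y²)^{−(n+2σ)/2}, defined for x ∈ ℝ^n and y > 0, satisfies the degenerate elliptic equation div(y^{1−2σ} ∇_{x,y} w) = 0 at every point of ℝ^n × (0,∞); equivalently, Δ_x w + ∂²_y w + ((1−2σ)/y) ∂_y w = 0 on ℝ^n × (0,∞). -/
open MeasureTheory Real

/-- The Laplacian on `ℝ^n`: sum of second partial derivatives. -/
noncomputable def lap {n : ℕ} (f : EuclideanSpace ℝ (Fin n) → ℝ) :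
    EuclideanSpace ℝ (Fin n) → ℝ :=
  fun x => ∑ i, fderiv ℝ (fun z => fderiv ℝ f z (EuclideanSpace.single i 1)) x
    (EuclideanSpace.single i 1)

/-- The generalized Poisson kernel `w(x,y) = y^(2σ) (|x|² + y²)^(-(n+2σ)/2)`. -/
noncomputable def poissonKer (n : ℕ) (σ : ℝ) (x : EuclideanSpace ℝ (Fin n)) (y : ℝ) : ℝ :=
  y ^ (2 * σ) * (‖x‖ ^ 2 + y ^ 2) ^ (-((n : ℝ) + 2 * σ) / 2)

theorem stmt_10 (n : ℕ) (hn : 1 ≤ n) (σ : ℝ) (hσ : σ ∈ Set.Ioo (0:ℝ) 1) :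
    ∀ (x : EuclideanSpace ℝ (Fin n)) (y : ℝ), 0 < y →
      lap (fun x' => poissonKer n σ x' y) x
        + deriv (fun t => deriv (fun s => poissonKer n σ x s) t) y
        + ((1 - 2 * σ) / y) * deriv (fun s => poissonKer n σ x s) y = 0 := by
  obtain ⟨hσ0, hσ1⟩ := hσ
  intro x y hy
  set p : ℝ := -((n : ℝ) + 2 * σ) / 2 with hp
  have hs : ∀ z : EuclideanSpace ℝ (Fin n), (0:ℝ) < ‖z‖ ^ 2 + y ^ 2 := by
    intro z; positivity
  -- first x-derivative
  have hF : ∀ z : EuclideanSpace ℝ (Fin n),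
      HasFDerivAt (fun z' => poissonKer n σ z' y)
        ((y ^ (2*σ)) • ((p * (‖z‖ ^ 2 + y ^ 2) ^ (p-1)) • (2 • innerSL ℝ z))) z := by
    intro z
    have h1 : HasFDerivAt (fun z' : EuclideanSpace ℝ (Fin n) => ‖z'‖ ^ 2 + y ^ 2)
        (2 • innerSL ℝ z) z := (hasStrictFDerivAt_norm_sq z).hasFDerivAt.add_const _
    have h2 := (h1.rpow_const (p := p) (Or.inl (hs z).ne')).const_mul (y ^ (2*σ))
    simp only [poissonKer]
    rw [← hp]
    exact h2
  have hF' : ∀ (z : EuclideanSpace ℝ (Fin n)) (i : Fin n),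
      fderiv ℝ (fun z' => poissonKer n σ z' y) z (EuclideanSpace.single i 1)
        = (2 * y ^ (2*σ) * p) * ((‖z‖ ^ 2 + y ^ 2) ^ (p-1) * z i) := by
    intro z i
    rw [(hF z).fderiv]
    simp only [ContinuousLinearMap.smul_apply, smul_eq_mul, innerSL_apply_apply,
      EuclideanSpace.inner_single_right, RCLike.inner_apply, conj_trivial]
    ring
  have hnorm : ∑ i, (x i) ^ 2 = ‖x‖ ^ 2 := by
    rw [EuclideanSpace.norm_eq, Real.sq_sqrt (by positivity)]
    simp [sq_abs]
  have hG : ∀ i : Fin n,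
      fderiv ℝ (fun z => fderiv ℝ (fun x' => poissonKer n σ x' y) z
          (EuclideanSpace.single i 1)) x (EuclideanSpace.single i 1)
        = (2 * y ^ (2*σ) * p) * ((‖x‖ ^ 2 + y ^ 2) ^ (p-1)
            + (x i) * ((p-1) * (‖x‖ ^ 2 + y ^ 2) ^ (p-1-1) * (2 * x i))) := by
    intro i
    have heq : (fun z => fderiv ℝ (fun x' => poissonKer n σ x' y) z
        (EuclideanSpace.single i 1))
        = fun z : EuclideanSpace ℝ (Fin n) =>
          (2 * y ^ (2*σ) * p) * ((‖z‖ ^ 2 + y ^ 2) ^ (p-1) * z i) :=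
      funext fun z => hF' z i
    rw [heq]
    have h1 : HasFDerivAt (fun z' : EuclideanSpace ℝ (Fin n) => ‖z'‖ ^ 2 + y ^ 2)
        (2 • innerSL ℝ x) x := (hasStrictFDerivAt_norm_sq x).hasFDerivAt.add_const _
    have h3 := h1.rpow_const (p := p - 1) (Or.inl (hs x).ne')
    have h4 : HasFDerivAt (fun z : EuclideanSpace ℝ (Fin n) => z i)
        (EuclideanSpace.proj (𝕜 := ℝ) i) x := (EuclideanSpace.proj (𝕜 := ℝ) i).hasFDerivAt
    have h5 := (h3.mul h4).const_mul (2 * y ^ (2*σ) * p)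
    rw [(show HasFDerivAt (fun z : EuclideanSpace ℝ (Fin n) =>
        (2 * y ^ (2*σ) * p) * ((‖z‖ ^ 2 + y ^ 2) ^ (p-1) * z i)) _ x from h5).fderiv]
    simp only [ContinuousLinearMap.smul_apply, ContinuousLinearMap.add_apply,
      smul_eq_mul, innerSL_apply_apply, EuclideanSpace.inner_single_right, RCLike.inner_apply,
      conj_trivial, PiLp.proj_apply, EuclideanSpace.single_apply, if_true]
    ring
  have hL : lap (fun x' => poissonKer n σ x' y) x
      = (2 * y ^ (2*σ) * p) * ((n : ℝ) * (‖x‖ ^ 2 + y ^ 2) ^ (p-1)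
          + (p-1) * (‖x‖ ^ 2 + y ^ 2) ^ (p-1-1) * (2 * ‖x‖ ^ 2)) := by
    unfold lap
    rw [Finset.sum_congr rfl fun i _ => hG i]
    rw [← Finset.mul_sum, Finset.sum_add_distrib, Finset.sum_const, Finset.card_univ,
      Fintype.card_fin, nsmul_eq_mul]
    congr 1
    have hsum : ∑ i, x i * ((p-1) * (‖x‖ ^ 2 + y ^ 2) ^ (p-1-1) * (2 * x i))
        = ((p-1) * (‖x‖ ^ 2 + y ^ 2) ^ (p-1-1) * 2) * ∑ i, (x i) ^ 2 := by
      rw [Finset.mul_sum]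
      exact Finset.sum_congr rfl fun i _ => by ring
    rw [hsum, hnorm]
    ring
  -- first y-derivative
  have hw : ∀ t : ℝ, 0 < t → HasDerivAt (fun s' => poissonKer n σ x s')
      (2*σ * t^(2*σ-1) * (‖x‖^2 + t^2)^p + t^(2*σ) * (2*t * p * (‖x‖^2+t^2)^(p-1))) t := by
    intro t ht
    have h1 : HasDerivAt (fun s' : ℝ => s' ^ (2*σ)) (2*σ * t^(2*σ-1)) t :=
      Real.hasDerivAt_rpow_const (Or.inl ht.ne')
    have h2 : HasDerivAt (fun s' : ℝ => ‖x‖^2 + s'^2) (2*t) t := by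
      simpa using (hasDerivAt_pow 2 t).const_add (‖x‖^2)
    have h3 := h2.rpow_const (p := p) (Or.inl (by positivity : (0:ℝ) < ‖x‖^2+t^2).ne')
    have h4 := h1.mul h3
    simp only [poissonKer]
    rw [← hp]
    exact h4
  have hd1 : deriv (fun s' => poissonKer n σ x s') y
      = 2*σ * y^(2*σ-1) * (‖x‖^2 + y^2)^p + y^(2*σ) * (2*y * p * (‖x‖^2+y^2)^(p-1)) :=
    (hw y hy).deriv
  have hev : (fun t => deriv (fun s' => poissonKer n σ x s') t)
      =ᶠ[nhds y] fun t => 2*σ * t^(2*σ-1) * (‖x‖^2 + t^2)^p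
        + t^(2*σ) * (2*t * p * (‖x‖^2+t^2)^(p-1)) := by
    filter_upwards [Ioi_mem_nhds hy] with t ht using (hw t ht).deriv
  -- second y-derivative
  have hA : HasDerivAt (fun t : ℝ => t ^ (2*σ-1)) ((2*σ-1) * y^(2*σ-1-1)) y :=
    Real.hasDerivAt_rpow_const (Or.inl hy.ne')
  have hB : HasDerivAt (fun t : ℝ => ‖x‖^2 + t^2) (2*y) y := by
    simpa using (hasDerivAt_pow 2 y).const_add (‖x‖^2)
  have hBp := hB.rpow_const (p := p) (Or.inl (hs x).ne')
  have hBp1 := hB.rpow_const (p := p-1) (Or.inl (hs x).ne')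
  have hD : HasDerivAt (fun t : ℝ => t ^ (2*σ)) (2*σ * y^(2*σ-1)) y :=
    Real.hasDerivAt_rpow_const (Or.inl hy.ne')
  have hE : HasDerivAt (fun t : ℝ => 2*t*p) (2*p) y := by
    simpa using ((hasDerivAt_id y).const_mul 2).mul_const p
  have hW2 := ((hA.const_mul (2*σ)).mul hBp).add (hD.mul (hE.mul hBp1))
  have hd2 : deriv (fun t => deriv (fun s' => poissonKer n σ x s') t) y
      = (2*σ * ((2*σ-1) * y^(2*σ-1-1))) * (‖x‖^2+y^2)^p
          + 2*σ*y^(2*σ-1) * (2*y * p * (‖x‖^2+y^2)^(p-1))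
        + ((2*σ * y^(2*σ-1)) * (2*y*p * (‖x‖^2+y^2)^(p-1))
          + y^(2*σ) * (2*p * (‖x‖^2+y^2)^(p-1)
              + 2*y*p * (2*y * (p-1) * (‖x‖^2+y^2)^(p-1-1)))) := by
    rw [hev.deriv_eq]
    exact hW2.deriv
  -- put everything together
  rw [hL, hd1, hd2]
  have E1 : y^(2*σ-1) = y^(2*σ)/y := by rw [Real.rpow_sub hy, Real.rpow_one]
  have E2 : y^(2*σ-1-1) = y^(2*σ)/y/y := by
    rw [Real.rpow_sub hy, Real.rpow_sub hy, Real.rpow_one]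
  have E3 : (‖x‖^2+y^2)^(p-1) = (‖x‖^2+y^2)^p/(‖x‖^2+y^2) := by
    rw [Real.rpow_sub (hs x), Real.rpow_one]
  have E4 : (‖x‖^2+y^2)^(p-1-1) = (‖x‖^2+y^2)^p/(‖x‖^2+y^2)/(‖x‖^2+y^2) := by
    rw [Real.rpow_sub (hs x), Real.rpow_sub (hs x), Real.rpow_one]
  rw [E2, E1, E4, E3, hp]
  have hyne : y ≠ 0 := hy.ne'
  have hsne : ‖x‖^2 + y^2 ≠ 0 := (hs x).ne'
  field_simp
  ring
end

section
/- Let n ≥ 1 be an integer, a ∈ ℝ, and k ≥ 0 an integer. There exists a constant C > 0 depending only on n, a, k such that for every y > 0 and every z ∈ ℝ^n, the k-th iterated Laplacian in z of the function z ↦ (|z|² + y²)^{−a/2} satisfies |Δ_z^k (|z|² + y²)^{−a/2}| ≤ C (|z|² + y²)^{−(a+2k)/2}. -/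
open MeasureTheory Real

namespace Stmt12

noncomputable def ev (y t : ℝ) (p : ℝ × ℕ × ℝ) : ℝ :=
  p.1 * t ^ p.2.1 * (t + y ^ 2) ^ (-p.2.2)

noncomputable def evL (y t : ℝ) (L : List (ℝ × ℕ × ℝ)) : ℝ := (L.map (ev y t)).sum

def Dp (p : ℝ × ℕ × ℝ) : List (ℝ × ℕ × ℝ) :=
  [(p.1 * p.2.1, p.2.1 - 1, p.2.2), (-(p.1 * p.2.2), p.2.1, p.2.2 + 1)]

def DL (L : List (ℝ × ℕ × ℝ)) : List (ℝ × ℕ × ℝ) := L.flatMap Dp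

def lapL (n : ℕ) (L : List (ℝ × ℕ × ℝ)) : List (ℝ × ℕ × ℝ) :=
  ((DL (DL L)).map fun p => (4 * p.1, p.2.1 + 1, p.2.2)) ++
    ((DL L).map fun p => (2 * (n : ℝ) * p.1, p.2))

lemma evL_append (y t : ℝ) (A B : List (ℝ × ℕ × ℝ)) :
    evL y t (A ++ B) = evL y t A + evL y t B := by
  simp [evL]

lemma hasDerivAt_ev (y t : ℝ) (p : ℝ × ℕ × ℝ) (h : 0 < t + y ^ 2) :
    HasDerivAt (fun s => ev y s p) (evL y t (Dp p)) t := by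
  obtain ⟨c, j, e⟩ := p
  have h1 : HasDerivAt (fun s : ℝ => c * s ^ j) (c * (j * t ^ (j - 1))) t :=
    (hasDerivAt_pow j t).const_mul c
  have h2 : HasDerivAt (fun s : ℝ => (s + y ^ 2) ^ (-e)) (-e * (t + y ^ 2) ^ (-e - 1)) t := by
    have := ((hasDerivAt_id t).add_const (y ^ 2)).rpow_const (p := -e) (Or.inl h.ne')
    simpa using this
  have h3 : HasDerivAt (fun s : ℝ => c * s ^ j * (s + y ^ 2) ^ (-e)) _ t := h1.mul h2
  convert h3 using 1
  · rfl
  simp only [evL, Dp, ev, List.map_cons, List.map_nil, List.sum_cons, List.sum_nil]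
  rw [show -e - 1 = -(e + 1) by ring]
  ring

lemma hasDerivAt_evL (y t : ℝ) (L : List (ℝ × ℕ × ℝ)) (h : 0 < t + y ^ 2) :
    HasDerivAt (fun s => evL y s L) (evL y t (DL L)) t := by
  induction L with
  | nil => simpa [evL, DL] using hasDerivAt_const t (0 : ℝ)
  | cons p L ih =>
    have h5 : evL y t (DL (p :: L)) = evL y t (Dp p) + evL y t (DL L) := by
      rw [show DL (p :: L) = Dp p ++ DL L by simp [DL], evL_append]
    rw [h5]
    exact (hasDerivAt_ev y t p h).add ih

variable {n : ℕ}

lemma hasFDerivAt_evL_norm (y : ℝ) (hy : y ≠ 0) (L : List (ℝ × ℕ × ℝ))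
    (z : EuclideanSpace ℝ (Fin n)) :
    HasFDerivAt (fun w : EuclideanSpace ℝ (Fin n) => evL y (‖w‖ ^ 2) L)
      (evL y (‖z‖ ^ 2) (DL L) • ((2 : ℕ) • innerSL ℝ z)) z := by
  have h : 0 < ‖z‖ ^ 2 + y ^ 2 := by positivity
  exact (hasDerivAt_evL y (‖z‖ ^ 2) L h).comp_hasFDerivAt z
    (hasStrictFDerivAt_norm_sq z).hasFDerivAt

lemma fderiv_evL_apply (y : ℝ) (hy : y ≠ 0) (L : List (ℝ × ℕ × ℝ))
    (z : EuclideanSpace ℝ (Fin n)) (i : Fin n) :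
    fderiv ℝ (fun w : EuclideanSpace ℝ (Fin n) => evL y (‖w‖ ^ 2) L) z
      (EuclideanSpace.single i 1) = evL y (‖z‖ ^ 2) (DL L) * (2 * z i) := by
  rw [(hasFDerivAt_evL_norm y hy L z).fderiv]
  simp [EuclideanSpace.inner_single_right]

lemma sum_sq (z : EuclideanSpace ℝ (Fin n)) : ∑ i, z i ^ 2 = ‖z‖ ^ 2 := by
  rw [EuclideanSpace.norm_eq, Real.sq_sqrt (by positivity)]
  simp [Real.norm_eq_abs, sq_abs]

lemma evL_map4 (y t : ℝ) (M : List (ℝ × ℕ × ℝ)) :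
    evL y t (M.map fun p => (4 * p.1, p.2.1 + 1, p.2.2)) = 4 * t * evL y t M := by
  induction M with
  | nil => simp [evL]
  | cons p M ih =>
    simp only [List.map_cons, evL, List.sum_cons] at *
    rw [ih]
    simp only [ev, pow_succ]
    ring

lemma evL_scale (y t c : ℝ) (M : List (ℝ × ℕ × ℝ)) :
    evL y t (M.map fun p => (c * p.1, p.2)) = c * evL y t M := by
  induction M with
  | nil => simp [evL]
  | cons p M ih =>
    simp only [List.map_cons, evL, List.sum_cons] at *
    rw [ih]
    simp only [ev]
    ring

lemma lap_evL (y : ℝ) (hy : y ≠ 0) (L : List (ℝ × ℕ × ℝ)) :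
    lap (fun w : EuclideanSpace ℝ (Fin n) => evL y (‖w‖ ^ 2) L) =
      fun w => evL y (‖w‖ ^ 2) (lapL n L) := by
  funext z
  unfold lap
  have hrw : ∀ i : Fin n,
      (fun w : EuclideanSpace ℝ (Fin n) =>
          fderiv ℝ (fun w' : EuclideanSpace ℝ (Fin n) => evL y (‖w'‖ ^ 2) L) w
            (EuclideanSpace.single i 1)) =
        fun w => evL y (‖w‖ ^ 2) (DL L) * (2 * w i) :=
    fun i => funext fun w => fderiv_evL_apply y hy L w i
  have key : ∀ i : Fin n,
      fderiv ℝ (fun w : EuclideanSpace ℝ (Fin n) =>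
          fderiv ℝ (fun w' : EuclideanSpace ℝ (Fin n) => evL y (‖w'‖ ^ 2) L) w
            (EuclideanSpace.single i 1)) z (EuclideanSpace.single i 1) =
        evL y (‖z‖ ^ 2) (DL (DL L)) * (2 * z i) * (2 * z i) +
          evL y (‖z‖ ^ 2) (DL L) * 2 := by
    intro i
    rw [hrw i]
    have h1 := hasFDerivAt_evL_norm y hy (DL L) z
    have h2 : HasFDerivAt (fun w : EuclideanSpace ℝ (Fin n) => 2 * w i)
        ((2 : ℝ) • (EuclideanSpace.proj i : EuclideanSpace ℝ (Fin n) →L[ℝ] ℝ)) z :=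
      (EuclideanSpace.proj i : EuclideanSpace ℝ (Fin n) →L[ℝ] ℝ).hasFDerivAt.const_mul 2
    have h3 : HasFDerivAt (fun w : EuclideanSpace ℝ (Fin n) => evL y (‖w‖ ^ 2) (DL L) * (2 * w i)) _ z :=
      h1.mul h2
    rw [h3.fderiv]
    simp [EuclideanSpace.inner_single_right, EuclideanSpace.single_apply]
    ring
  rw [Finset.sum_congr rfl fun i _ => key i, Finset.sum_add_distrib, Finset.sum_const,
    Finset.card_univ, Fintype.card_fin, nsmul_eq_mul]
  have hsum : (∑ i : Fin n, evL y (‖z‖ ^ 2) (DL (DL L)) * (2 * z i) * (2 * z i))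
      = 4 * ‖z‖ ^ 2 * evL y (‖z‖ ^ 2) (DL (DL L)) := by
    have h6 : ∀ i : Fin n, evL y (‖z‖ ^ 2) (DL (DL L)) * (2 * z i) * (2 * z i)
        = 4 * evL y (‖z‖ ^ 2) (DL (DL L)) * z i ^ 2 := fun i => by ring
    rw [Finset.sum_congr rfl fun i _ => h6 i, ← Finset.mul_sum, sum_sq]
    ring
  rw [hsum]
  unfold lapL
  rw [evL_append, evL_map4, evL_scale]
  ring

lemma iterate_lap (k : ℕ) (y : ℝ) (hy : y ≠ 0) (L : List (ℝ × ℕ × ℝ)) :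
    lap^[k] (fun w : EuclideanSpace ℝ (Fin n) => evL y (‖w‖ ^ 2) L) =
      fun w => evL y (‖w‖ ^ 2) ((lapL n)^[k] L) := by
  induction k generalizing L with
  | zero => simp
  | succ k ih =>
    rw [Function.iterate_succ_apply, lap_evL y hy L, ih (lapL n L),
      Function.iterate_succ_apply]

def good (d : ℝ) (L : List (ℝ × ℕ × ℝ)) : Prop :=
  ∀ p ∈ L, p.1 = 0 ∨ (p.2.1 : ℝ) - p.2.2 = d

lemma good_DL {d : ℝ} {L : List (ℝ × ℕ × ℝ)} (h : good d L) : good (d - 1) (DL L) := by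
  intro p hp
  rw [DL, List.mem_flatMap] at hp
  obtain ⟨q, hq, hpq⟩ := hp
  obtain ⟨c, j, e⟩ := q
  rcases h _ hq with h0 | hd
  · simp only at h0
    subst h0
    simp only [Dp, List.mem_cons, List.mem_singleton, List.not_mem_nil, or_false] at hpq
    rcases hpq with rfl | rfl <;> left <;> simp
  · simp only at hd
    simp only [Dp, List.mem_cons, List.mem_singleton, List.not_mem_nil, or_false] at hpq
    rcases hpq with rfl | rfl
    · rcases Nat.eq_zero_or_pos j with rfl | hj
      · left; simp
      · right
        simp only
        rw [Nat.cast_sub hj]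
        push_cast
        linarith
    · right
      simp only
      push_cast
      linarith

lemma good_lapL {d : ℝ} {L : List (ℝ × ℕ × ℝ)} (h : good d L) : good (d - 1) (lapL n L) := by
  intro p hp
  rw [lapL, List.mem_append] at hp
  rcases hp with hp | hp
  · rw [List.mem_map] at hp
    obtain ⟨q, hq, rfl⟩ := hp
    rcases good_DL (good_DL h) _ hq with h0 | hd
    · left; simp [h0]
    · right
      simp only
      push_cast
      linarith
  · rw [List.mem_map] at hp
    obtain ⟨q, hq, rfl⟩ := hp
    rcases good_DL h _ hq with h0 | hd
    · left; simp [h0]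
    · right
      simpa using hd

noncomputable def sumAbs (L : List (ℝ × ℕ × ℝ)) : ℝ := (L.map fun p => |p.1|).sum

lemma sumAbs_nonneg (L : List (ℝ × ℕ × ℝ)) : 0 ≤ sumAbs L := by
  apply List.sum_nonneg
  intro x hx
  rw [List.mem_map] at hx
  obtain ⟨p, _, rfl⟩ := hx
  exact abs_nonneg _

lemma abs_evL_le {y t d : ℝ} (hy : 0 < y) (ht : 0 ≤ t) {L : List (ℝ × ℕ × ℝ)}
    (hL : good d L) : |evL y t L| ≤ sumAbs L * (t + y ^ 2) ^ d := by
  have hT : 0 < t + y ^ 2 := by positivity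
  induction L with
  | nil => simp [evL, sumAbs]
  | cons p L ih =>
    have hterm : |ev y t p| ≤ |p.1| * (t + y ^ 2) ^ d := by
      rcases hL p List.mem_cons_self with h0 | hd
      · simp [ev, h0]
      · have h1 : |ev y t p| = |p.1| * t ^ p.2.1 * (t + y ^ 2) ^ (-p.2.2) := by
          rw [ev, abs_mul, abs_mul, abs_of_nonneg (pow_nonneg ht _),
            abs_of_nonneg (Real.rpow_nonneg hT.le _)]
        rw [h1]
        have h2 : t ^ p.2.1 ≤ (t + y ^ 2) ^ p.2.1 :=
          pow_le_pow_left₀ ht (le_add_of_nonneg_right (by positivity)) _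
        calc |p.1| * t ^ p.2.1 * (t + y ^ 2) ^ (-p.2.2)
            ≤ |p.1| * (t + y ^ 2) ^ p.2.1 * (t + y ^ 2) ^ (-p.2.2) := by
              gcongr
          _ = |p.1| * (t + y ^ 2) ^ d := by
              rw [mul_assoc, ← Real.rpow_natCast (t + y ^ 2) p.2.1,
                ← Real.rpow_add hT]
              congr 1
              rw [show (p.2.1 : ℝ) + -p.2.2 = d by linarith]
    have hrest := ih fun q hq => hL q (List.mem_cons_of_mem p hq)
    have h3 : |evL y t (p :: L)| ≤ |ev y t p| + |evL y t L| := by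
      rw [show evL y t (p :: L) = ev y t p + evL y t L from rfl]
      exact abs_add_le _ _
    have h4 : sumAbs (p :: L) = |p.1| + sumAbs L := rfl
    rw [h4, add_mul]
    exact h3.trans (add_le_add hterm hrest)

end Stmt12

theorem stmt_12 (n : ℕ) (hn : 1 ≤ n) (a : ℝ) (k : ℕ) :
    ∃ C : ℝ, 0 < C ∧
      ∀ (y : ℝ), 0 < y → ∀ z : EuclideanSpace ℝ (Fin n),
        |(lap^[k] (fun z' => (‖z'‖ ^ 2 + y ^ 2) ^ (-a / 2))) z| ≤
          C * (‖z‖ ^ 2 + y ^ 2) ^ (-(a + 2 * k) / 2) := by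
  classical
  set L0 : List (ℝ × ℕ × ℝ) := [(1, 0, a / 2)] with hL0
  set Lk : List (ℝ × ℕ × ℝ) := (Stmt12.lapL n)^[k] L0 with hLk
  refine ⟨Stmt12.sumAbs Lk + 1, by
    have := Stmt12.sumAbs_nonneg Lk
    linarith, ?_⟩
  intro y hy z
  have hinit : (fun z' : EuclideanSpace ℝ (Fin n) => (‖z'‖ ^ 2 + y ^ 2) ^ (-a / 2)) =
      fun w : EuclideanSpace ℝ (Fin n) => Stmt12.evL y (‖w‖ ^ 2) L0 := by
    funext w
    simp [Stmt12.evL, Stmt12.ev, hL0, neg_div]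
  rw [hinit, Stmt12.iterate_lap k y hy.ne' L0]
  have hgood : ∀ m : ℕ, Stmt12.good (-a / 2 - m) ((Stmt12.lapL n)^[m] L0) := by
    intro m
    induction m with
    | zero =>
      intro p hp
      simp only [hL0, Function.iterate_zero, id_eq, List.mem_singleton] at hp
      subst hp
      right
      push_cast
      ring
    | succ m ih =>
      rw [Function.iterate_succ_apply',
        show (-a / 2 - ((m + 1 : ℕ) : ℝ)) = (-a / 2 - (m : ℝ)) - 1 by push_cast; ring]
      exact Stmt12.good_lapL (n := n) ih
  have hb := Stmt12.abs_evL_le hy (by positivity : (0:ℝ) ≤ ‖z‖ ^ 2) (hgood k)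
  have hexp : -a / 2 - (k : ℝ) = -(a + 2 * k) / 2 := by ring
  rw [hexp] at hb
  refine hb.trans ?_
  have hT : 0 < ‖z‖ ^ 2 + y ^ 2 := by positivity
  have := Real.rpow_nonneg hT.le (-(a + 2 * (k : ℝ)) / 2)
  nlinarith [Stmt12.sumAbs_nonneg Lk]
end

section
/- Let n ≥ 1 be an integer and δ > 0. There exist a constant C > 0 and ε₀ ∈ (0, δ) such that for every ε ∈ (0, ε₀), ∫_{B_δ} (ε² + |x|²)^{−n} dx ≥ ε^{−n} (I_n − C ε^n), where I_n = ∫_{ℝ^n} (1 + |z|²)^{−n} dz. -/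
open MeasureTheory Real

theorem stmt_19 (n : ℕ) (hn : 1 ≤ n) (δ : ℝ) (hδ : 0 < δ) :
    ∃ C : ℝ, 0 < C ∧ ∃ ε₀ ∈ Set.Ioo (0:ℝ) δ, ∀ ε ∈ Set.Ioo (0:ℝ) ε₀,
      (∫ x in Metric.ball (0 : EuclideanSpace ℝ (Fin n)) δ,
          (ε ^ 2 + ‖x‖ ^ 2) ^ (-(n : ℝ))) ≥
        ε ^ (-(n : ℝ)) *
          ((∫ z : EuclideanSpace ℝ (Fin n), (1 + ‖z‖ ^ 2) ^ (-(n : ℝ))) - C * ε ^ n) := by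
  set E := EuclideanSpace ℝ (Fin n)
  set f : E → ℝ := fun z => (1 + ‖z‖ ^ 2) ^ (-(n : ℝ)) with hf_def
  set I : ℝ := ∫ z : E, f z with hI_def
  have hfin : (Module.finrank ℝ E : ℝ) < (2 * n : ℕ) := by
    rw [finrank_euclideanSpace_fin]
    exact_mod_cast by omega
  have hf_int : Integrable f := by
    have := integrable_rpow_neg_one_add_norm_sq (E := E) (μ := volume) (r := (2 * n : ℕ)) hfin
    convert this using 2 with z
    push_cast
    ring_nf
    rfl
  have hf_pos : ∀ z : E, 0 < f z := fun z => rpow_pos_of_pos (by positivity) _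
  have hI_pos : 0 < I := by
    rw [hI_def]
    rw [integral_pos_iff_support_of_nonneg (fun z => (hf_pos z).le) hf_int]
    have : Function.support f = Set.univ := Set.eq_univ_of_forall fun z => (hf_pos z).ne'
    rw [this]
    simp [Measure.measure_univ_pos, NeZero.ne]
  refine ⟨((1 + δ ^ 2) / δ ^ 2) ^ n * I, by positivity, δ / 2, ⟨by positivity, by linarith⟩,
    fun ε hε => ?_⟩
  obtain ⟨hε0, hεδ⟩ := hε
  set g : E → ℝ := fun x => (ε ^ 2 + ‖x‖ ^ 2) ^ (-(n : ℝ)) with hg_def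
  have hε2 : (0:ℝ) < ε ^ 2 := by positivity
  -- key pointwise identity: f (ε⁻¹ • x) = (ε^2)^n * g x
  have hkey : ∀ x : E, f (ε⁻¹ • x) = (ε ^ 2) ^ (n : ℝ) * g x := by
    intro x
    have hx : 0 ≤ ε ^ 2 + ‖x‖ ^ 2 := by positivity
    have : (1 : ℝ) + ‖ε⁻¹ • x‖ ^ 2 = (ε ^ 2)⁻¹ * (ε ^ 2 + ‖x‖ ^ 2) := by
      rw [norm_smul, mul_pow, norm_inv, Real.norm_eq_abs, abs_of_pos hε0]
      field_simp
    rw [hf_def]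
    simp only [this]
    rw [mul_rpow (by positivity) hx, Real.inv_rpow hε2.le, ← Real.rpow_neg hε2.le, neg_neg]
  -- integrability of g
  have hg_int : Integrable g := by
    have h1 : Integrable (fun x : E => f (ε⁻¹ • x)) :=
      hf_int.comp_smul (inv_ne_zero hε0.ne')
    have h2 := h1.const_mul ((ε ^ 2) ^ (n : ℝ))⁻¹
    convert h2 using 1 with x
    ext x
    rw [hkey x]
    field_simp
  have hg_nonneg : ∀ x : E, 0 ≤ g x := fun x => rpow_nonneg (by positivity) _
  -- whole-space integral of g
  have hscale : ∫ x : E, g x = (ε ^ n)⁻¹ * I := by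
    have h1 : ∫ x : E, f (ε⁻¹ • x) = ε ^ Module.finrank ℝ E • ∫ x : E, f x :=
      Measure.integral_comp_inv_smul_of_nonneg volume f hε0.le
    rw [finrank_euclideanSpace_fin] at h1
    simp only [hkey, smul_eq_mul] at h1
    rw [integral_const_mul] at h1
    have he : (ε ^ 2 : ℝ) ^ (n:ℝ) = ε ^ (2 * n) := by
      rw [rpow_natCast, ← pow_mul]
    rw [he] at h1
    have hεn : (0:ℝ) < ε ^ n := by positivity
    have : ε ^ (2 * n) = ε ^ n * ε ^ n := by rw [two_mul, pow_add]
    rw [this] at h1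
    field_simp at h1 ⊢
    nlinarith [h1, hεn]
  -- split the integral
  have hsplit : (∫ x in Metric.ball (0:E) δ, g x) +
      (∫ x in (Metric.ball (0:E) δ)ᶜ, g x) = ∫ x : E, g x :=
    integral_add_compl measurableSet_ball hg_int
  -- tail bound
  have htail : (∫ x in (Metric.ball (0:E) δ)ᶜ, g x) ≤ ((1 + δ ^ 2) / δ ^ 2) ^ n * I := by
    have hbound : ∀ x ∈ (Metric.ball (0:E) δ)ᶜ,
        g x ≤ ((1 + δ ^ 2) / δ ^ 2) ^ n * f x := by
      intro x hx
      have hxδ : δ ≤ ‖x‖ := by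
        simpa [Metric.mem_ball, dist_eq_norm] using hx
      have hδx : δ ^ 2 ≤ ‖x‖ ^ 2 := by nlinarith
      have h1 : δ ^ 2 / (1 + δ ^ 2) * (1 + ‖x‖ ^ 2) ≤ ε ^ 2 + ‖x‖ ^ 2 := by
        rw [div_mul_eq_mul_div, div_le_iff₀ (by positivity)]
        nlinarith
      have h2 : g x ≤ (δ ^ 2 / (1 + δ ^ 2) * (1 + ‖x‖ ^ 2)) ^ (-(n:ℝ)) := by
        apply rpow_le_rpow_of_nonpos (by positivity) h1 (by simp)
      refine h2.trans_eq ?_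
      rw [mul_rpow (by positivity) (by positivity), hf_def]
      congr 1
      rw [Real.rpow_neg (by positivity), ← Real.inv_rpow (by positivity), inv_div,
        Real.rpow_natCast]
    have h3 : (∫ x in (Metric.ball (0:E) δ)ᶜ, g x) ≤
        ∫ x in (Metric.ball (0:E) δ)ᶜ, ((1 + δ ^ 2) / δ ^ 2) ^ n * f x := by
      apply setIntegral_mono_on hg_int.integrableOn
        ((hf_int.const_mul _).integrableOn) measurableSet_ball.compl hbound
    refine h3.trans ?_
    rw [integral_const_mul]
    have h4 : (∫ x in (Metric.ball (0:E) δ)ᶜ, f x) ≤ I :=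
      setIntegral_le_integral hf_int (ae_of_all _ fun z => (hf_pos z).le)
    have : (0:ℝ) ≤ ((1 + δ ^ 2) / δ ^ 2) ^ n := by positivity
    exact mul_le_mul_of_nonneg_left h4 this
  -- conclude
  have hεn : (0:ℝ) < ε ^ n := by positivity
  have hrw : ε ^ (-(n:ℝ)) = (ε ^ n)⁻¹ := by
    rw [rpow_neg hε0.le, rpow_natCast]
  rw [ge_iff_le, hrw]
  have hball : (∫ x in Metric.ball (0:E) δ, g x) =
      (ε ^ n)⁻¹ * I - (∫ x in (Metric.ball (0:E) δ)ᶜ, g x) := by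
    rw [← hscale]; linarith
  calc (ε ^ n)⁻¹ * (I - ((1 + δ ^ 2) / δ ^ 2) ^ n * I * ε ^ n)
      = (ε ^ n)⁻¹ * I - ((1 + δ ^ 2) / δ ^ 2) ^ n * I := by
        field_simp
    _ ≤ (ε ^ n)⁻¹ * I - (∫ x in (Metric.ball (0:E) δ)ᶜ, g x) := by linarith
    _ = ∫ x in Metric.ball (0:E) δ, g x := hball.symm
end
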